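/- Let α ∈ (0,1] and θ, β ∈ ℝ with β ≠ 0, and suppose θ + iβ is a root of P(X) = Xⁿ + p_{n-1}X^{n-1} + ⋯ + p₀ with real coefficients. Then both y₁(t) = exp(θ t^α/α)·cos(β t^α/α) and y₂(t) = exp(θ t^α/α)·sin(β t^α/α) satisfy ⁿT_α y + p_{n-1}·ⁿ⁻¹T_α y + ⋯ + p₀ y = 0 for all t > 0. -/

import Mathlib

noncomputable def condD (α : ℝ) (f : ℝ → ℝ) : ℝ → ℝ := fun t => t ^ (1 - α) * deriv f t

open Complex

private lemma keyD (α : ℝ) (hα0 : 0 < α) (L : ℂ) (k : ℕ) (t : ℝ) (ht : 0 < t) :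
    HasDerivAt (fun x : ℝ => L ^ k * Complex.exp (L * ((x ^ α : ℝ) : ℂ) / α))
      (L ^ (k+1) * Complex.exp (L * ((t ^ α : ℝ) : ℂ) / α) * ((t ^ (α - 1) : ℝ) : ℂ)) t := by
  have h1 : HasDerivAt (fun x : ℝ => x ^ α) (α * t ^ (α - 1)) t :=
    Real.hasDerivAt_rpow_const (Or.inl ht.ne')
  have h2 : HasDerivAt (fun x : ℝ => ((x ^ α : ℝ) : ℂ)) ((α * t ^ (α-1) : ℝ) : ℂ) t :=
    h1.ofReal_comp
  have h4 := (((h2.const_mul L).div_const (α : ℂ)).cexp).const_mul (L ^ k)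
  convert h4 using 1
  · rfl
  have hαne : (α : ℂ) ≠ 0 := by exact_mod_cast hα0.ne'
  push_cast
  field_simp
  ring

private lemma iter_eq (α : ℝ) (hα0 : 0 < α) (L : ℂ) (φ : ℂ →L[ℝ] ℝ) (k : ℕ)
    (t : ℝ) (ht : 0 < t) :
    (condD α)^[k] (fun x => φ (Complex.exp (L * ((x ^ α : ℝ) : ℂ) / α))) t
      = φ (L ^ k * Complex.exp (L * ((t ^ α : ℝ) : ℂ) / α)) := by
  induction k generalizing t ht with
  | zero => simp
  | succ k ih =>
    rw [Function.iterate_succ_apply']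
    have hev : (condD α)^[k] (fun x => φ (Complex.exp (L * ((x ^ α : ℝ) : ℂ) / α)))
        =ᶠ[nhds t] fun x => φ (L ^ k * Complex.exp (L * ((x ^ α : ℝ) : ℂ) / α)) := by
      filter_upwards [eventually_gt_nhds ht] with x hx using ih x hx
    have hder : HasDerivAt (fun x : ℝ => φ (L ^ k * Complex.exp (L * ((x ^ α : ℝ) : ℂ) / α)))
        (φ (L ^ (k+1) * Complex.exp (L * ((t ^ α : ℝ) : ℂ) / α) * ((t ^ (α - 1) : ℝ) : ℂ))) t :=
      φ.hasFDerivAt.comp_hasDerivAt t (keyD α hα0 L k t ht)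
    rw [condD, hev.deriv_eq, hder.deriv]
    have h5 : (L ^ (k+1) * Complex.exp (L * ((t ^ α : ℝ) : ℂ) / α) * ((t ^ (α - 1) : ℝ) : ℂ))
        = (t ^ (α-1) : ℝ) • (L ^ (k+1) * Complex.exp (L * ((t ^ α : ℝ) : ℂ) / α)) := by
      rw [Complex.real_smul]; ring
    rw [h5, map_smul, smul_eq_mul, ← mul_assoc, ← Real.rpow_add ht]
    norm_num

private lemma combine (φ : ℂ →L[ℝ] ℝ) (n : ℕ) (p : Fin n → ℝ) (L E : ℂ)
    (hroot : L ^ n + ∑ i : Fin n, (p i : ℂ) * L ^ (i : ℕ) = 0) :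
    φ (L ^ n * E) + ∑ i : Fin n, p i * φ (L ^ (i : ℕ) * E) = 0 := by
  have h : ∀ i : Fin n, p i * φ (L ^ (i : ℕ) * E) = φ ((p i : ℂ) * L ^ (i : ℕ) * E) := by
    intro i
    rw [show ((p i : ℂ) * L ^ (i : ℕ) * E) = p i • (L ^ (i : ℕ) * E) by
        rw [Complex.real_smul]; ring, map_smul, smul_eq_mul]
  simp_rw [h]
  rw [← map_sum, ← map_add]
  have h2 : L ^ n * E + ∑ i : Fin n, (p i : ℂ) * L ^ (i : ℕ) * E
      = (L ^ n + ∑ i : Fin n, (p i : ℂ) * L ^ (i : ℕ)) * E := by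
    rw [add_mul, Finset.sum_mul]
  rw [h2, hroot, zero_mul, map_zero]

open Complex in
theorem stmt_14 (α : ℝ) (hα : α ∈ Set.Ioc (0:ℝ) 1) (n : ℕ) (p : Fin n → ℝ)
    (θ β : ℝ) (hβ : β ≠ 0)
    (hroot : ((θ : ℂ) + β * Complex.I) ^ n
      + ∑ i : Fin n, (p i : ℂ) * ((θ : ℂ) + β * Complex.I) ^ (i : ℕ) = 0)
    (t : ℝ) (ht : 0 < t) :
    ((condD α)^[n] (fun x => Real.exp (θ * x ^ α / α) * Real.cos (β * x ^ α / α)) t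
      + ∑ i : Fin n, p i *
          (condD α)^[(i : ℕ)] (fun x => Real.exp (θ * x ^ α / α) * Real.cos (β * x ^ α / α)) t
      = 0) ∧
    ((condD α)^[n] (fun x => Real.exp (θ * x ^ α / α) * Real.sin (β * x ^ α / α)) t
      + ∑ i : Fin n, p i *
          (condD α)^[(i : ℕ)] (fun x => Real.exp (θ * x ^ α / α) * Real.sin (β * x ^ α / α)) t
      = 0) := by
  set L : ℂ := (θ : ℂ) + β * Complex.I with hL
  have hz : ∀ x : ℝ, L * ((x ^ α : ℝ) : ℂ) / (α : ℂ)
      = ((θ * x ^ α / α : ℝ) : ℂ) + ((β * x ^ α / α : ℝ) : ℂ) * Complex.I := by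
    intro x; rw [hL]; push_cast; ring
  have hre : (fun x => Real.exp (θ * x ^ α / α) * Real.cos (β * x ^ α / α))
      = fun x => Complex.reCLM (Complex.exp (L * ((x ^ α : ℝ) : ℂ) / α)) := by
    funext x
    rw [hz x]
    simp [Complex.exp_re]
  have him : (fun x => Real.exp (θ * x ^ α / α) * Real.sin (β * x ^ α / α))
      = fun x => Complex.imCLM (Complex.exp (L * ((x ^ α : ℝ) : ℂ) / α)) := by
    funext x
    rw [hz x]
    simp [Complex.exp_im]
  constructor
  · rw [hre]
    simp only [fun k => iter_eq α hα.1 L Complex.reCLM k t ht]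
    exact combine Complex.reCLM n p L _ hroot
  · rw [him]
    simp only [fun k => iter_eq α hα.1 L Complex.imCLM k t ht]
    exact combine Complex.imCLM n p L _ hroot
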